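/- Let G be a finite group acting ℚ-linearly on a finite-dimensional ℚ-vector space V, and let U be a G-invariant ℂ-subspace of V ⊗_ℚ ℂ such that V ⊗_ℚ ℂ is the internal direct sum of U and σ(U). Extend the action to the group algebra ℚ[G] acting on V and, ℂ-linearly, on V ⊗_ℚ ℂ. Then the only ℂ-linear map σ(U) → U commuting with the action of every element of G is zero if and only if the only ℂ-linear map σ(U) → U commuting with the action of every element of the center Z(ℚ[G]) is zero. -/

import Mathlib

open scoped TensorProduct

noncomputable section

instance : RingHomSurjective (starRingEnd ℂ) :=
  ⟨fun z => ⟨star z, by simp⟩⟩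

/-- Complex conjugation as a `ℚ`-linear map on `ℂ`. -/
def conjQLin : ℂ →ₗ[ℚ] ℂ where
  toFun z := (starRingEnd ℂ) z
  map_add' := by intros; simp
  map_smul' := by intro q z; simp [Rat.smul_def, map_mul]

/-- The antilinear involution `σ` on `ℂ ⊗[ℚ] V` determined by conjugation on the
first factor, packaged as a `starRingEnd ℂ`-semilinear map. -/
def sigmaV (V : Type*) [AddCommGroup V] [Module ℚ V] :
    (ℂ ⊗[ℚ] V) →ₛₗ[starRingEnd ℂ] (ℂ ⊗[ℚ] V) where
  toFun := TensorProduct.map conjQLin LinearMap.id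
  map_add' := map_add _
  map_smul' c x := by
    induction x using TensorProduct.induction_on with
    | zero => simp
    | tmul z v =>
        simp [TensorProduct.smul_tmul', smul_eq_mul, conjQLin, map_mul]
    | add x y hx hy =>
        simp only [smul_add, map_add]
        exact congrArg₂ (· + ·) hx hy

/-- `σ(U)`, the image of a `ℂ`-subspace `U` of `ℂ ⊗[ℚ] V` under the conjugation
involution; it is again a `ℂ`-subspace. -/
def sigmaSub {V : Type*} [AddCommGroup V] [Module ℚ V]
    (U : Submodule ℂ (ℂ ⊗[ℚ] V)) : Submodule ℂ (ℂ ⊗[ℚ] V) :=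
  U.map (sigmaV V)

/-- A `ℂ`-linear map `f : P → Q` between subspaces of `ℂ ⊗[ℚ] V` commutes with an
operator `T` of the ambient space. -/
def CommutesWith {V : Type*} [AddCommGroup V] [Module ℚ V]
    (P Q : Submodule ℂ (ℂ ⊗[ℚ] V)) (f : P →ₗ[ℂ] Q)
    (T : (ℂ ⊗[ℚ] V) →ₗ[ℂ] (ℂ ⊗[ℚ] V)) : Prop :=
  ∀ (x : P) (hx : T ↑x ∈ P), (f ⟨T ↑x, hx⟩ : ℂ ⊗[ℚ] V) = T ↑(f x)

/-- `E` is a polarization of the weight-one rational Hodge structure `(V, U)`: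
it is alternating, its `ℂ`-bilinear extension vanishes on `U × U`, and
`-i·E_ℂ(u, σ u)` is a positive real for every nonzero `u ∈ U`. -/
def IsPolarization {V : Type*} [AddCommGroup V] [Module ℚ V]
    (U : Submodule ℂ (ℂ ⊗[ℚ] V)) (E : V →ₗ[ℚ] V →ₗ[ℚ] ℚ) : Prop :=
  (∀ x : V, E x x = 0) ∧
  (∀ u ∈ U, ∀ u' ∈ U, LinearMap.BilinForm.baseChange ℂ E u u' = 0) ∧
  (∀ u ∈ U, u ≠ 0 → ∃ r : ℝ, 0 < r ∧
    -Complex.I * LinearMap.BilinForm.baseChange ℂ E u (sigmaV V u) = (r : ℂ))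


/-! ### Auxiliary material for the proof -/

section Aux

open MonoidAlgebra Representation

variable {G : Type*} [Group G] {V : Type*} [AddCommGroup V] [Module ℚ V]


noncomputable instance asModuleAddCommGroup {k G W : Type*} [CommSemiring k] [Monoid G]
    [AddCommGroup W] [Module k W] (ρ : Representation k G W) :
    AddCommGroup ρ.asModule :=
  inferInstanceAs (AddCommGroup W)

@[simp] lemma sigmaV_tmul (z : ℂ) (v : V) :
    sigmaV V (z ⊗ₜ[ℚ] v) = (starRingEnd ℂ) z ⊗ₜ[ℚ] v := rfl

lemma sigmaV_baseChange (φ : V →ₗ[ℚ] V) (x : ℂ ⊗[ℚ] V) :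
    sigmaV V (φ.baseChange ℂ x) = φ.baseChange ℂ (sigmaV V x) := by
  induction x using TensorProduct.induction_on with
  | zero => simp
  | tmul z v => simp
  | add a b ha hb => simp only [map_add, ha, hb]

/-- The base-changed representation of `G` on `ℂ ⊗[ℚ] V`. -/
def tauC (ρ : Representation ℚ G V) : Representation ℂ G (ℂ ⊗[ℚ] V) where
  toFun g := (ρ g).baseChange ℂ
  map_one' := by
    show (ρ 1).baseChange ℂ = 1
    rw [map_one]; exact LinearMap.baseChange_one ℚ V
  map_mul' g h := by
    show (ρ (g * h)).baseChange ℂ = _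
    rw [map_mul]; exact LinearMap.baseChange_mul _ _

lemma baseChange_zero' : ((0 : V →ₗ[ℚ] V).baseChange ℂ) = 0 :=
  map_zero (LinearMap.baseChangeHom ℚ ℂ V V)

lemma baseChange_sum' {ι : Type*} (s : Finset ι) (F : ι → (V →ₗ[ℚ] V)) :
    (∑ i ∈ s, F i).baseChange ℂ = ∑ i ∈ s, (F i).baseChange ℂ :=
  map_sum (LinearMap.baseChangeHom ℚ ℂ V V) F s

lemma tauC_apply (ρ : Representation ℚ G V) (g : G) : tauC ρ g = (ρ g).baseChange ℂ := rfl

variable (ρ : Representation ℚ G V)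

lemma sigmaSub_invariant {U : Submodule ℂ (ℂ ⊗[ℚ] V)}
    (hinv : ∀ g : G, ∀ x ∈ U, (ρ g).baseChange ℂ x ∈ U) (g : G) :
    ∀ x ∈ sigmaSub U, (ρ g).baseChange ℂ x ∈ sigmaSub U := by
  intro x hx
  rw [sigmaSub, Submodule.mem_map] at hx
  obtain ⟨u, hu, rfl⟩ := hx
  have h1 : sigmaV V ((ρ g).baseChange ℂ u) ∈ sigmaSub U :=
    Submodule.mem_map_of_mem (hinv g u hu)
  rwa [sigmaV_baseChange] at h1

lemma inv_cplxAlg {P : Submodule ℂ (ℂ ⊗[ℚ] V)}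
    (hP : ∀ g : G, ∀ x ∈ P, (ρ g).baseChange ℂ x ∈ P) (z : MonoidAlgebra ℂ G) :
    ∀ x ∈ P, (tauC ρ).asAlgebraHom z x ∈ P := by
  induction z using MonoidAlgebra.induction with
  | zero => intro x hx; simp only [map_zero, LinearMap.zero_apply]; exact P.zero_mem
  | single_add a b w _ _ ih =>
      intro x hx
      rw [map_add, LinearMap.add_apply, asAlgebraHom_single]
      exact P.add_mem (P.smul_mem _ (hP a x hx)) (ih x hx)

/-- The submodule of `(tauC ρ).asModule` corresponding to an invariant `ℂ`-subspace. -/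
def subModR {P : Submodule ℂ (ℂ ⊗[ℚ] V)}
    (hP : ∀ g : G, ∀ x ∈ P, (ρ g).baseChange ℂ x ∈ P) :
    Submodule (MonoidAlgebra ℂ G) (tauC ρ).asModule where
  carrier := (P : Set (ℂ ⊗[ℚ] V))
  add_mem' := P.add_mem
  zero_mem' := P.zero_mem
  smul_mem' r x hx := inv_cplxAlg ρ hP r x hx

lemma mem_subModR {P : Submodule ℂ (ℂ ⊗[ℚ] V)}
    (hP : ∀ g : G, ∀ x ∈ P, (ρ g).baseChange ℂ x ∈ P) (x : (tauC ρ).asModule) :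
    x ∈ subModR ρ hP ↔ x ∈ P := Iff.rfl

/-- The annihilator ideal of an invariant subspace. -/
def annIdeal (P : Submodule ℂ (ℂ ⊗[ℚ] V)) : Ideal (MonoidAlgebra ℂ G) where
  carrier := {r | ∀ x ∈ P, (tauC ρ).asAlgebraHom r x = 0}
  zero_mem' x hx := by simp
  add_mem' {a b} ha hb x hx := by
    rw [map_add, LinearMap.add_apply, ha x hx, hb x hx, add_zero]
  smul_mem' c r hr x hx := by
    rw [smul_eq_mul, map_mul, Module.End.mul_apply, hr x hx, map_zero]

lemma mem_annIdeal_iff (P : Submodule ℂ (ℂ ⊗[ℚ] V)) (r : MonoidAlgebra ℂ G) :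
    r ∈ annIdeal ρ P ↔ ∀ x ∈ P, (tauC ρ).asAlgebraHom r x = 0 := Iff.rfl

/-- Semisimplicity of `ℂ[G]` for a finite group `G` in an arbitrary universe. -/
lemma isSemisimpleRing_complex_monoidAlgebra (G : Type*) [Group G] [Finite G] :
    IsSemisimpleRing (MonoidAlgebra ℂ G) := by
  letI : Small.{0} G := Countable.toSmall G
  haveI : Finite (Shrink.{0} G) := Finite.of_equiv G (equivShrink G : G ≃ Shrink.{0} G)
  letI : Fintype (Shrink.{0} G) := Fintype.ofFinite _
  haveI : NeZero ((Fintype.card (Shrink.{0} G) : ℂ)) :=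
    ⟨Nat.cast_ne_zero.mpr Fintype.card_ne_zero⟩
  haveI : IsSemisimpleRing (MonoidAlgebra ℂ (Shrink.{0} G)) := inferInstance
  exact ((MonoidAlgebra.domCongr ℂ ℂ (Shrink.mulEquiv (α := G))).toRingEquiv).isSemisimpleRing

section GoodOps

variable (U : Submodule ℂ (ℂ ⊗[ℚ] V)) (f : sigmaSub U →ₗ[ℂ] U)

/-- An operator is *good* (for `f`) if it preserves `σ(U)` and commutes with `f`. -/
def GoodT (T : (ℂ ⊗[ℚ] V) →ₗ[ℂ] (ℂ ⊗[ℚ] V)) : Prop :=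
  (∀ x ∈ sigmaSub U, T x ∈ sigmaSub U) ∧ CommutesWith (sigmaSub U) U f T

variable {U f}

lemma goodT_zero : GoodT U f 0 := by
  refine ⟨fun x _ => by simpa using (sigmaSub U).zero_mem, fun x hx => ?_⟩
  have h0 : (⟨(0 : (ℂ ⊗[ℚ] V) →ₗ[ℂ] (ℂ ⊗[ℚ] V)) ↑x, hx⟩ : sigmaSub U) = 0 :=
    Subtype.ext (by simp)
  rw [h0, map_zero]
  simp

lemma GoodT.add {T₁ T₂} (h₁ : GoodT U f T₁) (h₂ : GoodT U f T₂) : GoodT U f (T₁ + T₂) := by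
  refine ⟨fun x hx => (sigmaSub U).add_mem (h₁.1 x hx) (h₂.1 x hx), fun x hx => ?_⟩
  have m1 : T₁ ↑x ∈ sigmaSub U := h₁.1 _ x.2
  have m2 : T₂ ↑x ∈ sigmaSub U := h₂.1 _ x.2
  have hsplit : (⟨(T₁ + T₂) ↑x, hx⟩ : sigmaSub U) = ⟨T₁ ↑x, m1⟩ + ⟨T₂ ↑x, m2⟩ :=
    Subtype.ext rfl
  rw [hsplit, map_add]
  push_cast [h₁.2 x m1, h₂.2 x m2]
  rfl

lemma GoodT.smul {T} (c : ℂ) (h : GoodT U f T) : GoodT U f (c • T) := by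
  refine ⟨fun x hx => (sigmaSub U).smul_mem c (h.1 x hx), fun x hx => ?_⟩
  have m1 : T ↑x ∈ sigmaSub U := h.1 _ x.2
  have hsplit : (⟨(c • T) ↑x, hx⟩ : sigmaSub U) = c • ⟨T ↑x, m1⟩ := Subtype.ext rfl
  rw [hsplit, map_smul]
  push_cast [h.2 x m1]
  rfl

lemma goodT_sum {ι : Type*} (s : Finset ι) (T : ι → ((ℂ ⊗[ℚ] V) →ₗ[ℂ] (ℂ ⊗[ℚ] V)))
    (h : ∀ i ∈ s, GoodT U f (T i)) : GoodT U f (∑ i ∈ s, T i) :=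
  Finset.sum_induction T (GoodT U f) (fun _ _ => GoodT.add) goodT_zero h

lemma goodT_ratAlg (hgood : ∀ g : G, GoodT U f ((ρ g).baseChange ℂ))
    (z : MonoidAlgebra ℚ G) : GoodT U f ((ρ.asAlgebraHom z).baseChange ℂ) := by
  induction z using MonoidAlgebra.induction with
  | zero => rw [map_zero, baseChange_zero']; exact goodT_zero
  | single_add a b w _ _ ih =>
      rw [map_add, LinearMap.baseChange_add, asAlgebraHom_single, LinearMap.baseChange_smul,
        ← algebraMap_smul ℂ b ((ρ a).baseChange ℂ)]
      exact ((hgood a).smul _).add ih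

end GoodOps

lemma asAlgebraHom_eq_sum_fintype [Fintype G] {W : Type*} [AddCommGroup W] [Module ℂ W]
    (τ : Representation ℂ G W) (r : MonoidAlgebra ℂ G) :
    τ.asAlgebraHom r = ∑ h : G, r.coeff h • τ h := by
  conv_lhs => rw [← sum_coeff_single r]
  rw [map_finsuppSum, Finsupp.sum_fintype]
  · exact Finset.sum_congr rfl fun h _ => by rw [asAlgebraHom_single]
  · intro h; rw [MonoidAlgebra.single_zero, map_zero]

/-- The class-sum-like central element `∑ g, g h g⁻¹` of `ℚ[G]`. -/
def classElt [Fintype G] (h : G) : MonoidAlgebra ℚ G :=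
  ∑ g : G, MonoidAlgebra.single (g * h * g⁻¹) (1 : ℚ)

lemma single_mul_classElt [Fintype G] (h a : G) (c : ℚ) :
    MonoidAlgebra.single a c * classElt h = classElt h * MonoidAlgebra.single a c := by
  unfold classElt
  rw [Finset.mul_sum, Finset.sum_mul]
  refine Fintype.sum_bijective (fun g => a * g) (Group.mulLeft_bijective a) _ _ fun g => ?_
  rw [MonoidAlgebra.single_mul_single, MonoidAlgebra.single_mul_single, mul_one, one_mul]
  congr 1
  group

lemma classElt_mem_center [Fintype G] (h : G) :
    classElt h ∈ Subalgebra.center ℚ (MonoidAlgebra ℚ G) := by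
  rw [Subalgebra.mem_center_iff]
  intro w
  conv_lhs => rw [← MonoidAlgebra.sum_coeff_single w]
  conv_rhs => rw [← MonoidAlgebra.sum_coeff_single w]
  rw [Finsupp.sum_mul, Finsupp.mul_sum]
  exact Finsupp.sum_congr fun a _ => single_mul_classElt h a (w.coeff a)

lemma baseChange_asAlgebraHom_classElt [Fintype G] (h : G) :
    (ρ.asAlgebraHom (classElt h)).baseChange ℂ = ∑ g : G, tauC ρ (g * h * g⁻¹) := by
  unfold classElt
  rw [map_sum, baseChange_sum']
  exact Finset.sum_congr rfl fun g _ => by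
    rw [asAlgebraHom_single, one_smul]; rfl

lemma inv_ratAlg {P : Submodule ℂ (ℂ ⊗[ℚ] V)}
    (hP : ∀ g : G, ∀ x ∈ P, (ρ g).baseChange ℂ x ∈ P) (z : MonoidAlgebra ℚ G) :
    ∀ x ∈ P, (ρ.asAlgebraHom z).baseChange ℂ x ∈ P := by
  induction z using MonoidAlgebra.induction with
  | zero =>
      intro x hx
      rw [map_zero, baseChange_zero']
      simpa using P.zero_mem
  | single_add a b w _ _ ih =>
      intro x hx
      rw [map_add, LinearMap.baseChange_add, LinearMap.add_apply, asAlgebraHom_single,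
        LinearMap.baseChange_smul, LinearMap.smul_apply]
      refine P.add_mem ?_ (ih x hx)
      have h2 := P.smul_mem (algebraMap ℚ ℂ b) (hP a x hx)
      rwa [algebraMap_smul] at h2

section Descend

variable {U : Submodule ℂ (ℂ ⊗[ℚ] V)}
  (hσ : ∀ g : G, ∀ x ∈ sigmaSub U, (ρ g).baseChange ℂ x ∈ sigmaSub U)
  (hU : ∀ g : G, ∀ x ∈ U, (ρ g).baseChange ℂ x ∈ U)

/-- Descend an `ℂ[G]`-linear map `σ(U) → U` to a `ℂ`-linear map. -/
def descendHom (F : (subModR ρ hσ) →ₗ[MonoidAlgebra ℂ G] (subModR ρ hU)) :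
    (sigmaSub U) →ₗ[ℂ] U where
  toFun u := ⟨(F ⟨(u : ℂ ⊗[ℚ] V), u.2⟩ : (tauC ρ).asModule), (F ⟨(u : ℂ ⊗[ℚ] V), u.2⟩).2⟩
  map_add' u v := Subtype.ext (by
    have h : (⟨((u + v : sigmaSub U) : ℂ ⊗[ℚ] V), (u + v).2⟩ : subModR ρ hσ)
        = (⟨(u : ℂ ⊗[ℚ] V), u.2⟩ : subModR ρ hσ) + ⟨(v : ℂ ⊗[ℚ] V), v.2⟩ := rfl
    show ((F _ : (tauC ρ).asModule) : ℂ ⊗[ℚ] V) = _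
    rw [h, map_add]
    rfl)
  map_smul' c u := Subtype.ext (by
    have h : (⟨((c • u : sigmaSub U) : ℂ ⊗[ℚ] V), (c • u).2⟩ : subModR ρ hσ)
        = (MonoidAlgebra.single (1 : G) c) • ⟨(u : ℂ ⊗[ℚ] V), u.2⟩ := Subtype.ext (by
          show c • (u : ℂ ⊗[ℚ] V) = (tauC ρ).asAlgebraHom (MonoidAlgebra.single 1 c) ↑u
          rw [asAlgebraHom_single, map_one]
          rfl)
    have h2 := congrArg (fun t => ((F t : (tauC ρ).asModule) : ℂ ⊗[ℚ] V)) h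
    have h3 : ((F ((MonoidAlgebra.single (1 : G) c) • ⟨(u : ℂ ⊗[ℚ] V), u.2⟩) :
        (tauC ρ).asModule) : ℂ ⊗[ℚ] V)
        = c • ((F ⟨(u : ℂ ⊗[ℚ] V), u.2⟩ : (tauC ρ).asModule) : ℂ ⊗[ℚ] V) := by
      rw [map_smul]
      show (tauC ρ).asAlgebraHom (MonoidAlgebra.single 1 c)
        (F ⟨(u : ℂ ⊗[ℚ] V), u.2⟩ : (tauC ρ).asModule) = _
      rw [asAlgebraHom_single, map_one]
      rfl
    exact h2.trans h3)

lemma descendHom_apply (F : (subModR ρ hσ) →ₗ[MonoidAlgebra ℂ G] (subModR ρ hU))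
    (u : sigmaSub U) :
    (descendHom ρ hσ hU F u : ℂ ⊗[ℚ] V)
      = (F ⟨(u : ℂ ⊗[ℚ] V), u.2⟩ : (tauC ρ).asModule) := rfl

lemma descendHom_commutes (F : (subModR ρ hσ) →ₗ[MonoidAlgebra ℂ G] (subModR ρ hU)) (g : G) :
    CommutesWith (sigmaSub U) U (descendHom ρ hσ hU F) ((ρ g).baseChange ℂ) := by
  intro u hu
  show ((F ⟨(ρ g).baseChange ℂ ↑u, hu⟩ : (tauC ρ).asModule) : ℂ ⊗[ℚ] V)
    = (ρ g).baseChange ℂ ((F ⟨(u : ℂ ⊗[ℚ] V), u.2⟩ : (tauC ρ).asModule) : ℂ ⊗[ℚ] V)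
  have h : (⟨(ρ g).baseChange ℂ ↑u, hu⟩ : subModR ρ hσ)
      = (MonoidAlgebra.single g (1 : ℂ)) • ⟨(u : ℂ ⊗[ℚ] V), u.2⟩ := Subtype.ext (by
        show (ρ g).baseChange ℂ (u : ℂ ⊗[ℚ] V)
          = (tauC ρ).asAlgebraHom (MonoidAlgebra.single g 1) ↑u
        rw [asAlgebraHom_single, one_smul]
        rfl)
  have h2 := congrArg (fun t => ((F t : (tauC ρ).asModule) : ℂ ⊗[ℚ] V)) h
  have h3 : ((F ((MonoidAlgebra.single g (1 : ℂ)) • ⟨(u : ℂ ⊗[ℚ] V), u.2⟩) :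
      (tauC ρ).asModule) : ℂ ⊗[ℚ] V)
      = (ρ g).baseChange ℂ ((F ⟨(u : ℂ ⊗[ℚ] V), u.2⟩ : (tauC ρ).asModule) : ℂ ⊗[ℚ] V) := by
    rw [map_smul]
    show (tauC ρ).asAlgebraHom (MonoidAlgebra.single g 1)
      (F ⟨(u : ℂ ⊗[ℚ] V), u.2⟩ : (tauC ρ).asModule) = _
    rw [asAlgebraHom_single, one_smul]
    rfl
  exact h2.trans h3

end Descend

/-- Over a semisimple ring, two nonzero-ish modules whose annihilators lie in a common
maximal ideal admit a nonzero homomorphism between them. -/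
lemma exists_nonzero_hom {A : Type*} [Ring A] [IsSemisimpleRing A]
    {M N : Type*} [AddCommGroup M] [Module A M] [AddCommGroup N] [Module A N]
    {m : Ideal A} (hm : m.IsMaximal)
    (hM : Module.annihilator A M ≤ m) (hN : Module.annihilator A N ≤ m) :
    ∃ F : M →ₗ[A] N, F ≠ 0 := by
  obtain ⟨c, hc⟩ := ComplementedLattice.exists_isCompl (m : Submodule A A)
  haveI : IsSimpleModule A (A ⧸ (m : Submodule A A)) :=
    isSimpleModule_iff_isCoatom.mpr (Ideal.isMaximal_def.mp hm)
  haveI : IsSimpleModule A c :=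
    IsSimpleModule.congr (Submodule.quotientEquivOfIsCompl _ c hc).symm
  have hcbot : c ≠ ⊥ := by
    rintro rfl
    exact (Ideal.isMaximal_def.mp hm).1 (by simpa using hc.sup_eq_top)
  have hnotle : ∀ P : Ideal A, P ≤ m → ¬ c ≤ (P : Submodule A A) := by
    intro P hPm hcP
    have hcm : c ≤ (m : Submodule A A) := hcP.trans hPm
    exact hcbot (le_bot_iff.mp (disjoint_iff.mp hc.disjoint ▸ le_inf hcm le_rfl))
  obtain ⟨a, haC, haM⟩ := SetLike.not_le_iff_exists.mp (hnotle _ hM)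
  obtain ⟨b, hbC, hbN⟩ := SetLike.not_le_iff_exists.mp (hnotle _ hN)
  obtain ⟨x, hx⟩ : ∃ x : M, a • x ≠ 0 := by
    by_contra hno
    push_neg at hno
    exact haM (Module.mem_annihilator.mpr hno)
  obtain ⟨y, hy⟩ : ∃ y : N, b • y ≠ 0 := by
    by_contra hno
    push_neg at hno
    exact hbN (Module.mem_annihilator.mpr hno)
  let ψ : c →ₗ[A] M := (LinearMap.toSpanSingleton A M x).comp (Submodule.subtype c)
  let φm : c →ₗ[A] N := (LinearMap.toSpanSingleton A N y).comp (Submodule.subtype c)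
  have hψa : ψ ⟨a, haC⟩ = a • x := rfl
  have hψne : ψ ≠ 0 := by
    intro h0
    apply hx
    rw [← hψa, h0]
    rfl
  have hψinj : Function.Injective ψ := by
    rcases eq_bot_or_eq_top (LinearMap.ker ψ) with hk | hk
    · exact LinearMap.ker_eq_bot.mp hk
    · exact absurd (LinearMap.ker_eq_top.mp hk) hψne
  obtain ⟨D, hD⟩ := ComplementedLattice.exists_isCompl (LinearMap.range ψ)
  let eψ := LinearEquiv.ofInjective ψ hψinj
  refine ⟨φm ∘ₗ eψ.symm.toLinearMap ∘ₗ Submodule.linearProjOfIsCompl (LinearMap.range ψ) D hD,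
    fun h0 => hy ?_⟩
  let cb : c := ⟨b, hbC⟩
  have hπ : Submodule.linearProjOfIsCompl (LinearMap.range ψ) D hD (ψ cb)
      = ⟨ψ cb, LinearMap.mem_range_self ψ cb⟩ :=
    Submodule.linearProjOfIsCompl_apply_left hD ⟨ψ cb, LinearMap.mem_range_self ψ cb⟩
  have heψ : eψ.symm ⟨ψ cb, LinearMap.mem_range_self ψ cb⟩ = cb := by
    rw [LinearEquiv.symm_apply_eq]
    exact Subtype.ext rfl
  have h1 := congrArg (fun F => F (ψ cb)) h0
  have h2 : φm (eψ.symm (Submodule.linearProjOfIsCompl (LinearMap.range ψ) D hD (ψ cb))) = 0 := h1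
  rw [hπ, heψ] at h2
  calc b • y = φm cb := rfl
    _ = 0 := h2

lemma annihilator_le_annIdeal {P : Submodule ℂ (ℂ ⊗[ℚ] V)}
    (hP : ∀ g : G, ∀ x ∈ P, (ρ g).baseChange ℂ x ∈ P) :
    Module.annihilator (MonoidAlgebra ℂ G) (subModR ρ hP) ≤ annIdeal ρ P := by
  intro r hr
  rw [Module.mem_annihilator] at hr
  intro x hx
  exact Subtype.ext_iff.mp (hr ⟨x, hx⟩)

end Aux

set_option maxHeartbeats 2000000 in
/-- Rigidity of a finite group action on a weight-one rational Hodge structure is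
equivalent to rigidity of the action of the center of the group algebra `ℚ[G]`. -/
theorem rigid_iff_center_rigid
    (G : Type*) [Group G] [Finite G]
    (V : Type*) [AddCommGroup V] [Module ℚ V] [FiniteDimensional ℚ V]
    (ρ : Representation ℚ G V)
    (U : Submodule ℂ (ℂ ⊗[ℚ] V))
    (hinv : ∀ g : G, ∀ x ∈ U, LinearMap.baseChange ℂ (ρ g) x ∈ U)
    (hcompl : IsCompl U (sigmaSub U)) :
    (∀ f : sigmaSub U →ₗ[ℂ] U,
        (∀ g : G, CommutesWith (sigmaSub U) U f (LinearMap.baseChange ℂ (ρ g))) →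
          f = 0) ↔
      (∀ f : sigmaSub U →ₗ[ℂ] U,
        (∀ z ∈ Subalgebra.center ℚ (MonoidAlgebra ℚ G),
          CommutesWith (sigmaSub U) U f
            (LinearMap.baseChange ℂ (ρ.asAlgebraHom z))) → f = 0) := by
  classical
  letI : Fintype G := Fintype.ofFinite G
  have hinvs : ∀ g : G, ∀ x ∈ sigmaSub U, (ρ g).baseChange ℂ x ∈ sigmaSub U :=
    fun g => sigmaSub_invariant ρ hinv g
  constructor
  · -- hard direction: G-rigidity implies center-rigidity
    intro hL f hf
    haveI : IsSemisimpleRing (MonoidAlgebra ℂ G) := isSemisimpleRing_complex_monoidAlgebra G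
    set τ := tauC ρ with hτ
    set I := annIdeal ρ (sigmaSub U) with hI
    set J := annIdeal ρ U with hJ
    have hIJ : I ⊔ J = ⊤ := by
      by_contra hne
      obtain ⟨m, hm, hle⟩ := Ideal.exists_le_maximal _ hne
      have h3 := exists_nonzero_hom (A := MonoidAlgebra ℂ G)
        (M := subModR ρ hinvs) (N := subModR ρ hinv) hm
        ((annihilator_le_annIdeal ρ hinvs).trans (le_sup_left.trans hle))
        ((annihilator_le_annIdeal ρ hinv).trans (le_sup_right.trans hle))
      let F := h3.choose
      have hFne : F ≠ 0 := h3.choose_spec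
      have h0 : descendHom ρ hinvs hinv F = 0 :=
        hL (descendHom ρ hinvs hinv F) (fun g => descendHom_commutes ρ hinvs hinv F g)
      apply hFne
      refine LinearMap.ext fun u => ?_
      have h2 : ((descendHom ρ hinvs hinv F) ⟨u.1, u.2⟩ : ℂ ⊗[ℚ] V)
          = ((F u : (tauC ρ).asModule) : ℂ ⊗[ℚ] V) := rfl
      rw [h0] at h2
      exact Subtype.ext h2.symm
    have h1mem : (1 : (MonoidAlgebra ℂ G)) ∈ I ⊔ J := by rw [hIJ]; exact Submodule.mem_top
    obtain ⟨aa, haa, bb, hbb, hab⟩ := Submodule.mem_sup.mp h1mem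
    -- the averaged operator B
    set cardC : ℂ := (Fintype.card G : ℂ) with hcard
    let Bop : G → ((ℂ ⊗[ℚ] V) →ₗ[ℂ] (ℂ ⊗[ℚ] V)) :=
      fun h => (ρ.asAlgebraHom (classElt h)).baseChange ℂ
    have hBopGood : ∀ h : G, GoodT U f (Bop h) := by
      intro h
      exact ⟨fun x hx => inv_ratAlg ρ hinvs (classElt h) x hx,
        hf (classElt h) (classElt_mem_center h)⟩
    set B : (ℂ ⊗[ℚ] V) →ₗ[ℂ] (ℂ ⊗[ℚ] V) :=
      ∑ h : G, (cardC⁻¹ * bb.coeff h) • Bop h with hB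
    have hBGood : GoodT U f B :=
      goodT_sum _ _ (fun h _ => (hBopGood h).smul _)
    have hconj : ∀ (g h : G) (w : ℂ ⊗[ℚ] V),
        τ (g * h * g⁻¹) w = τ g (τ h (τ g⁻¹ w)) := by
      intro g h w
      rw [mul_assoc, map_mul, map_mul]
      rfl
    have hBw : ∀ w, B w = cardC⁻¹ • ∑ g : G, τ g (τ.asAlgebraHom bb (τ g⁻¹ w)) := by
      intro w
      have h1 : B w = ∑ h : G, ∑ g : G, (cardC⁻¹ * bb.coeff h) • τ (g * h * g⁻¹) w := by
        rw [hB, LinearMap.sum_apply]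
        refine Finset.sum_congr rfl fun h _ => ?_
        rw [LinearMap.smul_apply,
          show Bop h = ∑ g : G, tauC ρ (g * h * g⁻¹) from baseChange_asAlgebraHom_classElt ρ h,
          LinearMap.sum_apply, Finset.smul_sum]
      rw [h1, Finset.sum_comm, Finset.smul_sum]
      refine Finset.sum_congr rfl fun g _ => ?_
      rw [asAlgebraHom_eq_sum_fintype, LinearMap.sum_apply, map_sum, Finset.smul_sum]
      refine Finset.sum_congr rfl fun h _ => ?_
      rw [LinearMap.smul_apply, map_smul, hconj, smul_smul]
    have hBU : ∀ y ∈ U, B y = 0 := by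
      intro y hy
      rw [hBw]
      have hz : ∀ g ∈ Finset.univ (α := G),
          τ g (τ.asAlgebraHom bb (τ g⁻¹ y)) = 0 := by
        intro g _
        have hyy : τ g⁻¹ y ∈ U := hinv g⁻¹ y hy
        rw [(mem_annIdeal_iff ρ U bb).mp hbb _ hyy, map_zero]
      rw [Finset.sum_congr rfl hz, Finset.sum_const, smul_zero, smul_zero]
    have hBs : ∀ x ∈ sigmaSub U, B x = x := by
      intro x hx
      rw [hBw]
      have hone : ∀ g ∈ Finset.univ (α := G),
          τ g (τ.asAlgebraHom bb (τ g⁻¹ x)) = x := by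
        intro g _
        have hxg : τ g⁻¹ x ∈ sigmaSub U := hinvs g⁻¹ x hx
        have h4 : τ.asAlgebraHom (aa + bb) (τ g⁻¹ x) = τ g⁻¹ x := by
          rw [hab, map_one]
          rfl
        rw [map_add, LinearMap.add_apply,
          (mem_annIdeal_iff ρ (sigmaSub U) aa).mp haa _ hxg, zero_add] at h4
        rw [h4, ← Module.End.mul_apply, ← map_mul, mul_inv_cancel, map_one]
        rfl
      rw [Finset.sum_congr rfl hone, Finset.sum_const, Finset.card_univ,
        ← Nat.cast_smul_eq_nsmul ℂ, smul_smul, hcard,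
        inv_mul_cancel₀ (Nat.cast_ne_zero.mpr Fintype.card_ne_zero), one_smul]
    refine LinearMap.ext fun x => ?_
    have hBx : B ↑x ∈ sigmaSub U := by
      rw [hBs ↑x x.2]
      exact x.2
    have hcm := hBGood.2 x hBx
    have hxx : (⟨B ↑x, hBx⟩ : sigmaSub U) = x := Subtype.ext (hBs ↑x x.2)
    rw [hxx] at hcm
    have hz : (↑(f x) : ℂ ⊗[ℚ] V) = 0 := by
      rw [hcm, hBU _ (f x).2]
    exact Subtype.ext (by simpa using hz)
  · -- easy direction
    intro hZ f hG
    refine hZ f fun z _ => ?_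
    exact (goodT_ratAlg ρ (fun g => ⟨hinvs g, hG g⟩) z).2

end
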